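/- arXiv:2603.11773 — 2 statements merged into one kernel-verified Lean document; each statement's English description precedes it below -/
import Mathlib

section
/- Let F be a bipartite graph with at least one edge and let s = p(F). Then for all sufficiently large n, every proper edge coloring of the complete bipartite graph K_{s, n-s} contains a rainbow copy of F. -/
open Filter SimpleGraph

/-- `G` contains a copy of `F` as a (not necessarily induced) subgraph. -/
def Contains {α β : Type} (F : SimpleGraph α) (G : SimpleGraph β) : Prop :=
  ∃ f : F →g G, Function.Injective f

/-- A proper edge coloring: edges sharing a vertex receive distinct colors. -/
def IsProperEdgeColoring {β : Type} (G : SimpleGraph β) (c : Sym2 β → ℕ) : Prop :=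
  ∀ e₁ ∈ G.edgeSet, ∀ e₂ ∈ G.edgeSet, e₁ ≠ e₂ → (∃ v, v ∈ e₁ ∧ v ∈ e₂) → c e₁ ≠ c e₂

/-- There is a rainbow copy of `F` in `G` with respect to the edge coloring `c`:
a copy of `F` all of whose edges receive pairwise distinct colors. -/
def HasRainbowCopy {α β : Type} (F : SimpleGraph α) (G : SimpleGraph β)
    (c : Sym2 β → ℕ) : Prop :=
  ∃ f : F →g G, Function.Injective f ∧
    ∀ e₁ ∈ F.edgeSet, ∀ e₂ ∈ F.edgeSet,
      c (Sym2.map f e₁) = c (Sym2.map f e₂) → e₁ = e₂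

/-- The blowup of `G` with part sizes `t`. -/
def blowup {α : Type} (G : SimpleGraph α) (t : α → ℕ) :
    SimpleGraph (Σ v : α, Fin (t v)) where
  Adj x y := G.Adj x.1 y.1
  symm := ⟨fun _ _ h => G.adj_symm h⟩
  loopless := ⟨fun x h => G.irrefl h⟩

/-- `t` describes a balanced blowup on `n` vertices: all parts are nonempty,
any two part sizes differ by at most one, and the total number of vertices is `n`. -/
def IsBalanced {α : Type} [Fintype α] (t : α → ℕ) (n : ℕ) : Prop :=
  (∀ v, 0 < t v) ∧ (∀ u v, t u ≤ t v + 1) ∧ ∑ v, t v = n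

/-- The number of subgraphs of `G` isomorphic to `H`. -/
noncomputable def copyCount {α β : Type} (H : SimpleGraph α) (G : SimpleGraph β) : ℕ :=
  Set.ncard {H' : G.Subgraph | Nonempty (H ≃g H'.coe)}

/-- The set of sizes of the smaller color class over all proper 2-colorings of the
vertices of `F`; its least element is `p(F)`. -/
def smallerClassSizes {α : Type} [Fintype α] (F : SimpleGraph α) : Set ℕ :=
  {t | ∃ χ : α → Bool, (∀ u v, F.Adj u v → χ u ≠ χ v) ∧
    t = min (Finset.univ.filter fun x => χ x = true).card
            (Finset.univ.filter fun x => χ x = false).card}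

/-- The set of `j` such that `F` is a subgraph of some blowup of `C_{2j-1}`;
its greatest element is `γ(F)`. -/
def gammaSet {α : Type} (F : SimpleGraph α) : Set ℕ :=
  {j | ∃ t : Fin (2 * j - 1) → ℕ, (∀ v, 0 < t v) ∧
    Contains F (blowup (cycleGraph (2 * j - 1)) t)}

/-- For a bipartite graph `F` with at least one edge and `s = p(F)`, every proper edge
coloring of `K_{s,n-s}` contains a rainbow copy of `F`, for all sufficiently large `n`. -/
theorem stmt5 {α : Type} [Fintype α] (F : SimpleGraph α)
    (hedge : F.edgeSet.Nonempty) (s : ℕ) (hs : IsLeast (smallerClassSizes F) s) :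
    ∃ n₀ : ℕ, ∀ n ≥ n₀, ∀ c : Sym2 (Fin s ⊕ Fin (n - s)) → ℕ,
      IsProperEdgeColoring (completeBipartiteGraph (Fin s) (Fin (n - s))) c →
      HasRainbowCopy F (completeBipartiteGraph (Fin s) (Fin (n - s))) c := by
  classical
  obtain ⟨χ₀, hχ₀, hmin⟩ := hs.1
  have hbool : ∀ b : Bool, b ≠ true → b = false := fun b => by cases b <;> simp
  obtain ⟨χ, hχ, hcard⟩ :
      ∃ χ : α → Bool, (∀ u v, F.Adj u v → χ u ≠ χ v) ∧
        (Finset.univ.filter fun x => χ x = true).card = s := by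
    rcases min_choice ((Finset.univ.filter fun x => χ₀ x = true).card)
        ((Finset.univ.filter fun x => χ₀ x = false).card) with h | h
    · exact ⟨χ₀, hχ₀, by rw [hmin, h]⟩
    · refine ⟨fun x => !χ₀ x, fun u v huv h2 => hχ₀ u v huv (by simpa using h2), ?_⟩
      rw [hmin, h]
      congr 1
      ext x
      simp
  have hadj : ∃ u v, F.Adj u v := by
    obtain ⟨e0, he0⟩ := hedge
    induction e0 using Sym2.ind with
    | _ u v => exact ⟨u, v, he0⟩
  have hspos : 0 < s := by
    obtain ⟨u, v, huv⟩ := hadj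
    rw [← hcard]
    apply Finset.card_pos.mpr
    by_cases hu : χ u = true
    · exact ⟨u, Finset.mem_filter.mpr ⟨Finset.mem_univ _, hu⟩⟩
    · have hv : χ v = true := by
        cases hv : χ v with
        | true => rfl
        | false => exact absurd ((hbool _ hu).trans hv.symm) (hχ u v huv)
      exact ⟨v, Finset.mem_filter.mpr ⟨Finset.mem_univ _, hv⟩⟩
  have ecard : Fintype.card {x // χ x = true} = s := by
    rw [Fintype.card_subtype]; exact hcard
  set e : {x // χ x = true} ≃ Fin s := Fintype.equivFinOfCardEq ecard with he
  obtain ⟨fL, hfLdef⟩ : ∃ fL : α → Fin s, ∀ a (h : χ a = true), fL a = e ⟨a, h⟩ :=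
    ⟨fun a => if h : χ a = true then e ⟨a, h⟩ else ⟨0, hspos⟩, fun a h => dif_pos h⟩
  have hfLinj : ∀ a a', χ a = true → χ a' = true → fL a = fL a' → a = a' := by
    intro a a' ha ha' hfa
    rw [hfLdef a ha, hfLdef a' ha'] at hfa
    have := e.injective hfa
    exact congrArg Subtype.val this
  set N := Fintype.card α with hN
  refine ⟨s + (N * N * N + N + 1), ?_⟩
  intro n hn c hc
  have hm : N * N * N + N + 1 ≤ n - s := by omega
  have hm0 : 0 < n - s := by omega
  -- star injectivity from properness
  have hedgeK : ∀ (x : Fin s) (y : Fin (n - s)),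
      (s(Sum.inl x, Sum.inr y) : Sym2 (Fin s ⊕ Fin (n - s))) ∈
        (completeBipartiteGraph (Fin s) (Fin (n - s))).edgeSet := by
    intro x y
    simp [SimpleGraph.mem_edgeSet]
  have hstarL : ∀ (x : Fin s) (y y' : Fin (n - s)), y ≠ y' →
      c s(Sum.inl x, Sum.inr y) ≠ c s(Sum.inl x, Sum.inr y') := by
    intro x y y' hyy'
    apply hc _ (hedgeK x y) _ (hedgeK x y')
    · intro h
      rw [Sym2.eq_iff] at h
      rcases h with ⟨-, h2⟩ | ⟨h1, -⟩
      · exact hyy' (Sum.inr.inj h2)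
      · exact Sum.inl_ne_inr h1
    · exact ⟨Sum.inl x, by simp, by simp⟩
  have hstarR : ∀ (x x' : Fin s) (y : Fin (n - s)), x ≠ x' →
      c s(Sum.inl x, Sum.inr y) ≠ c s(Sum.inl x', Sum.inr y) := by
    intro x x' y hxx'
    apply hc _ (hedgeK x y) _ (hedgeK x' y)
    · intro h
      rw [Sym2.eq_iff] at h
      rcases h with ⟨h1, -⟩ | ⟨h1, -⟩
      · exact hxx' (Sum.inl.inj h1)
      · exact Sum.inl_ne_inr h1
    · exact ⟨Sum.inr y, by simp, by simp⟩
  -- greedy embedding of the right side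
  have greedy : ∀ S : Finset α, ∃ g : α → Fin (n - s), Set.InjOn g ↑S ∧
      ∀ v ∈ S, ∀ w ∈ S, v ≠ w → ∀ a a', F.Adj a v → F.Adj a' w →
        c s(Sum.inl (fL a), Sum.inr (g v)) ≠ c s(Sum.inl (fL a'), Sum.inr (g w)) := by
    intro S
    induction S using Finset.induction_on with
    | empty => exact ⟨fun _ => ⟨0, hm0⟩, by simp [Set.InjOn], by simp⟩
    | @insert u S hu ih =>
      obtain ⟨g', hinj', hprop'⟩ := ih
      set bad : Finset (Fin (n - s)) :=
        S.image g' ∪ ((Finset.univ : Finset α) ×ˢ S ×ˢ (Finset.univ : Finset α)).biUnion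
          (fun p => Finset.univ.filter fun y =>
            c s(Sum.inl (fL p.1), Sum.inr y) = c s(Sum.inl (fL p.2.2), Sum.inr (g' p.2.1)))
        with hbad
      have hfiltercard : ∀ p : α × α × α,
          (Finset.univ.filter fun y =>
            c s(Sum.inl (fL p.1), Sum.inr y)
              = c s(Sum.inl (fL p.2.2), Sum.inr (g' p.2.1))).card ≤ 1 := by
        intro p
        apply Finset.card_le_one.mpr
        intro y hy y' hy'
        rw [Finset.mem_filter] at hy hy'
        by_contra hne
        exact hstarL (fL p.1) y y' hne (hy.2.trans hy'.2.symm)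
      have hScard : S.card ≤ N := by
        rw [hN, ← Finset.card_univ]
        exact Finset.card_le_card (Finset.subset_univ S)
      have hbadcard : bad.card < n - s := by
        have h1 : bad.card ≤ (S.image g').card +
            (((Finset.univ : Finset α) ×ˢ S ×ˢ (Finset.univ : Finset α)).biUnion
              (fun p => Finset.univ.filter fun y =>
                c s(Sum.inl (fL p.1), Sum.inr y)
                  = c s(Sum.inl (fL p.2.2), Sum.inr (g' p.2.1)))).card := by
          rw [hbad]; exact Finset.card_union_le _ _
        have h2 : (S.image g').card ≤ N := le_trans (Finset.card_image_le) hScard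
        have h3 : (((Finset.univ : Finset α) ×ˢ S ×ˢ (Finset.univ : Finset α)).biUnion
              (fun p => Finset.univ.filter fun y =>
                c s(Sum.inl (fL p.1), Sum.inr y)
                  = c s(Sum.inl (fL p.2.2), Sum.inr (g' p.2.1)))).card ≤ N * N * N := by
          refine le_trans (Finset.card_biUnion_le) ?_
          refine le_trans (Finset.sum_le_card_nsmul _ _ 1 (fun p _ => hfiltercard p)) ?_
          simp only [smul_eq_mul, mul_one, Finset.card_product, Finset.card_univ, ← hN]
          calc N * (S.card * N) ≤ N * (N * N) :=
                Nat.mul_le_mul_left _ (Nat.mul_le_mul_right _ hScard)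
            _ = N * N * N := by ring
        omega
      obtain ⟨y, hy⟩ : ∃ y, y ∉ bad := by
        by_contra h
        push_neg at h
        have hsub : (Finset.univ : Finset (Fin (n - s))) ⊆ bad := fun y _ => h y
        have := Finset.card_le_card hsub
        rw [Finset.card_univ, Fintype.card_fin] at this
        omega
      refine ⟨Function.update g' u y, ?_, ?_⟩
      · intro x hx x' hx' hgx
        rw [Finset.coe_insert, Set.mem_insert_iff] at hx hx'
        rcases hx with rfl | hx <;> rcases hx' with rfl | hx'
        · rfl
        · exfalso
          rw [Function.update_self, Function.update_of_ne (fun h => hu (by rwa [h] at hx')) ] at hgx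
          exact hy (Finset.mem_union_left _
            (Finset.mem_image.mpr ⟨x', hx', hgx.symm⟩))
        · exfalso
          rw [Function.update_self, Function.update_of_ne (fun h => hu (by rwa [h] at hx))] at hgx
          exact hy (Finset.mem_union_left _
            (Finset.mem_image.mpr ⟨x, hx, hgx⟩))
        · rw [Function.update_of_ne (fun h => hu (by rwa [h] at hx)),
            Function.update_of_ne (fun h => hu (by rwa [h] at hx'))] at hgx
          exact hinj' hx hx' hgx
      · have key : ∀ w ∈ S, ∀ a a', F.Adj a u → F.Adj a' w →
            c s(Sum.inl (fL a), Sum.inr y) ≠ c s(Sum.inl (fL a'), Sum.inr (g' w)) := by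
          intro w hw a a' hau ha'w hcc
          apply hy
          apply Finset.mem_union_right
          apply Finset.mem_biUnion.mpr
          refine ⟨(a, w, a'), ?_, ?_⟩
          · simp [hw]
          · exact Finset.mem_filter.mpr ⟨Finset.mem_univ _, hcc⟩
        intro v hv w hw hvw a a' hav haw
        rw [Finset.mem_insert] at hv hw
        rcases hv with rfl | hv <;> rcases hw with rfl | hw
        · exact absurd rfl hvw
        · rw [Function.update_self, Function.update_of_ne (fun h => hu (by rwa [h] at hw))]
          exact key w hw a a' hav haw
        · rw [Function.update_self, Function.update_of_ne (fun h => hu (by rwa [h] at hv))]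
          exact fun h => key v hv a' a haw hav h.symm
        · rw [Function.update_of_ne (fun h => hu (by rwa [h] at hv)),
            Function.update_of_ne (fun h => hu (by rwa [h] at hw))]
          exact hprop' v hv w hw hvw a a' hav haw
  obtain ⟨g, hginj, hgprop⟩ := greedy (Finset.univ.filter fun x => χ x = false)
  have hmemS : ∀ x, χ x = false → x ∈ (Finset.univ.filter fun x => χ x = false) :=
    fun x hx => Finset.mem_filter.mpr ⟨Finset.mem_univ _, hx⟩
  set fdef : α → Fin s ⊕ Fin (n - s) :=
    fun x => if χ x = true then Sum.inl (fL x) else Sum.inr (g x) with hfdef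
  have hft : ∀ x, χ x = true → fdef x = Sum.inl (fL x) := by
    intro x hx; rw [hfdef]; simp [hx]
  have hff : ∀ x, χ x = false → fdef x = Sum.inr (g x) := by
    intro x hx; rw [hfdef]; simp [hx]
  have hflip : ∀ u v, F.Adj u v → χ u ≠ true → χ v = true := by
    intro u v huv h
    cases hv : χ v with
    | true => rfl
    | false => exact absurd ((hbool _ h).trans hv.symm) (hχ u v huv)
  have hfalse : ∀ u v, F.Adj u v → χ u = true → χ v = false := by
    intro u v huv h
    apply hbool
    intro hv
    exact hχ u v huv (h.trans hv.symm)
  have hmap : ∀ {x y : α}, F.Adj x y →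
      (completeBipartiteGraph (Fin s) (Fin (n - s))).Adj (fdef x) (fdef y) := by
    intro x y hxy
    by_cases hx : χ x = true
    · rw [hft x hx, hff y (hfalse x y hxy hx)]
      simp
    · rw [hff x (hbool _ hx), hft y (hflip x y hxy hx)]
      simp
  refine ⟨⟨fdef, hmap⟩, ?_, ?_⟩
  · intro x y hxy
    replace hxy : fdef x = fdef y := hxy
    by_cases hx : χ x = true <;> by_cases hy : χ y = true
    · rw [hft x hx, hft y hy] at hxy
      exact hfLinj x y hx hy (Sum.inl.inj hxy)
    · rw [hft x hx, hff y (hbool _ hy)] at hxy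
      exact absurd hxy (Sum.inl_ne_inr)
    · rw [hff x (hbool _ hx), hft y hy] at hxy
      exact absurd hxy (Sum.inr_ne_inl)
    · rw [hff x (hbool _ hx), hff y (hbool _ hy)] at hxy
      exact hginj (by simpa using hbool _ hx) (by simpa using hbool _ hy)
        (Sum.inr.inj hxy)
  · have claim : ∀ u v u' v', F.Adj u v → F.Adj u' v' → χ u = true → χ u' = true →
        c (Sym2.map fdef s(u, v)) = c (Sym2.map fdef s(u', v')) →
        (s(u, v) : Sym2 α) = s(u', v') := by
      intro u v u' v' huv hu'v' hu hu' hcc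
      rw [Sym2.map_pair_eq, Sym2.map_pair_eq, hft u hu, hft u' hu',
        hff v (hfalse u v huv hu), hff v' (hfalse u' v' hu'v' hu')] at hcc
      by_cases hvv' : v = v'
      · subst hvv'
        by_cases huu' : u = u'
        · subst huu'; rfl
        · exfalso
          have hfl : fL u ≠ fL u' := fun h => huu' (hfLinj u u' hu hu' h)
          exact hstarR (fL u) (fL u') (g v) hfl hcc
      · exfalso
        exact hgprop v (hmemS v (hfalse u v huv hu)) v'
          (hmemS v' (hfalse u' v' hu'v' hu')) hvv' u u' huv hu'v' hcc
    have h2 : ∀ u v u' v', F.Adj u v → F.Adj u' v' → χ u = true →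
        c (Sym2.map fdef s(u, v)) = c (Sym2.map fdef s(u', v')) →
        (s(u, v) : Sym2 α) = s(u', v') := by
      intro u v u' v' huv hu'v' hu hcc
      by_cases hu' : χ u' = true
      · exact claim u v u' v' huv hu'v' hu hu' hcc
      · have hv' : χ v' = true := hflip u' v' hu'v' hu'
        have hswap : (s(u', v') : Sym2 α) = s(v', u') := Sym2.eq_swap
        rw [hswap] at hcc ⊢
        exact claim u v v' u' huv hu'v'.symm hu hv' hcc
    intro e₁ he₁ e₂ he₂
    induction e₁ using Sym2.ind with
    | _ u v =>
      induction e₂ using Sym2.ind with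
      | _ u' v' =>
        intro hcc
        have huv : F.Adj u v := he₁
        have hu'v' : F.Adj u' v' := he₂
        by_cases hu : χ u = true
        · exact h2 u v u' v' huv hu'v' hu hcc
        · have hv : χ v = true := hflip u v huv hu
          have hswap : (s(u, v) : Sym2 α) = s(v, u) := Sym2.eq_swap
          rw [hswap] at hcc ⊢
          exact h2 v u u' v' huv.symm hu'v' hv hcc
end

section
/- Let F be a bipartite graph with at least one edge, p(F) = s, and let a, b be integers with a < s < b. Then the maximum number of copies of K_{a,b} in an n-vertex graph that admits a proper edge coloring without a rainbow copy of F equals (1+o(1))·N(K_{a,b}, K_{s-1, n-s+1}) as n → ∞. -/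
open Filter SimpleGraph

set_option maxHeartbeats 1000000
set_option linter.unusedSectionVars false
section AUXALL
open Finset
variable {β : Type} [Fintype β] [DecidableEq β]


instance finSub (G : SimpleGraph β) : Finite G.Subgraph := by
  have : Function.Injective (fun H : G.Subgraph => (H.verts, H.Adj)) := by
    intro H1 H2 h
    simp only [Prod.mk.injEq] at h
    exact SimpleGraph.Subgraph.ext h.1 h.2
  exact Finite.of_injective _ this



open scoped Classical in
noncomputable def cN (G : SimpleGraph β) (S : Finset β) : Finset β :=
  univ.filter (fun v => ∀ x ∈ S, G.Adj x v)



lemma mem_cN {G : SimpleGraph β} {S : Finset β} {v : β} :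
    v ∈ cN G S ↔ ∀ x ∈ S, G.Adj x v := by
  classical
  simp [cN]



open scoped Classical in
noncomputable def pairFinset (G : SimpleGraph β) (a b : ℕ) : Finset (Finset β × Finset β) :=
  (((univ : Finset β).powersetCard a) ×ˢ ((univ : Finset β).powersetCard b)).filter
    (fun p => Disjoint p.1 p.2 ∧ ∀ x ∈ p.1, ∀ y ∈ p.2, G.Adj x y)

lemma mem_pairFinset {G : SimpleGraph β} {a b : ℕ} {p : Finset β × Finset β} :
    p ∈ pairFinset G a b ↔ p.1.card = a ∧ p.2.card = b ∧ Disjoint p.1 p.2 ∧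
      ∀ x ∈ p.1, ∀ y ∈ p.2, G.Adj x y := by
  classical
  simp [pairFinset, Finset.mem_powersetCard, and_assoc]



lemma copyCount_le_pairs (G : SimpleGraph β) (a b : ℕ) :
    _root_.copyCount (completeBipartiteGraph (Fin a) (Fin b)) G ≤ (pairFinset G a b).card := by
  classical
  rw [_root_.copyCount]
  -- map each subgraph to a pair via a chosen iso
  set K := completeBipartiteGraph (Fin a) (Fin b)
  have key : ∀ H' ∈ {H' : G.Subgraph | Nonempty (K ≃g H'.coe)},
      ∃ p ∈ pairFinset G a b, H'.verts = ↑(p.1 ∪ p.2) ∧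
        (∀ x y, H'.Adj x y ↔ ((x ∈ p.1 ∧ y ∈ p.2) ∨ (x ∈ p.2 ∧ y ∈ p.1))) := by
    rintro H' ⟨φ⟩
    set g : Fin a ⊕ Fin b → β := fun p => ((φ p : H'.verts) : β) with hg
    have hginj : Function.Injective g := Subtype.val_injective.comp φ.toEquiv.injective
    have hsurj : ∀ x (hx : x ∈ H'.verts), ∃ p, g p = x := by
      intro x hx
      refine ⟨φ.symm ⟨x, hx⟩, ?_⟩
      rw [hg]
      simp only []
      rw [RelIso.apply_symm_apply]
    have hadj : ∀ x y, H'.Adj x y ↔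
        ((∃ i, g (Sum.inl i) = x) ∧ (∃ j, g (Sum.inr j) = y)) ∨
        ((∃ j, g (Sum.inr j) = x) ∧ (∃ i, g (Sum.inl i) = y)) := by
      intro x y
      constructor
      · intro h
        have hx := h.fst_mem
        have hy := h.snd_mem
        have hco : H'.coe.Adj ⟨x, hx⟩ ⟨y, hy⟩ := h
        have hK : K.Adj (φ.symm ⟨x, hx⟩) (φ.symm ⟨y, hy⟩) := by
          rw [φ.map_adj_iff.symm, RelIso.apply_symm_apply, RelIso.apply_symm_apply]
          exact hco
        have hgp : g (φ.symm ⟨x, hx⟩) = x := by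
          rw [hg]; simp only []; rw [RelIso.apply_symm_apply]
        have hgq : g (φ.symm ⟨y, hy⟩) = y := by
          rw [hg]; simp only []; rw [RelIso.apply_symm_apply]
        set p := φ.symm ⟨x, hx⟩
        set q := φ.symm ⟨y, hy⟩
        clear_value p q
        rcases p with i | j <;> rcases q with i' | j' <;>
          simp only [K, completeBipartiteGraph_adj] at hK <;> simp at hK
        · exact Or.inl ⟨⟨i, hgp⟩, ⟨j', hgq⟩⟩
        · exact Or.inr ⟨⟨j, hgp⟩, ⟨i', hgq⟩⟩
      · rintro (⟨⟨i, rfl⟩, ⟨j, rfl⟩⟩ | ⟨⟨j, rfl⟩, ⟨i, rfl⟩⟩)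
        · have hK : K.Adj (Sum.inl i) (Sum.inr j) := by simp [K]
          exact φ.map_adj_iff.mpr hK
        · have hK : K.Adj (Sum.inr j) (Sum.inl i) := by simp [K]
          exact φ.map_adj_iff.mpr hK
    refine ⟨((univ : Finset (Fin a)).image fun i => g (Sum.inl i),
             (univ : Finset (Fin b)).image fun j => g (Sum.inr j)), ?_, ?_, ?_⟩
    · refine mem_pairFinset.mpr ⟨?_, ?_, ?_, ?_⟩
      · rw [Finset.card_image_of_injective _ (fun i i' h => Sum.inl_injective (hginj h))]
        simp
      · rw [Finset.card_image_of_injective _ (fun j j' h => Sum.inr_injective (hginj h))]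
        simp
      · rw [Finset.disjoint_left]
        rintro x hx hx'
        simp only [Finset.mem_image, mem_univ, true_and] at hx hx'
        obtain ⟨i, hi⟩ := hx; obtain ⟨j, hj⟩ := hx'
        exact absurd (hginj (hi.trans hj.symm)) (by simp)
      · intro x hx y hy
        simp only [Finset.mem_image, mem_univ, true_and] at hx hy
        obtain ⟨i, rfl⟩ := hx; obtain ⟨j, rfl⟩ := hy
        exact H'.adj_sub ((hadj _ _).mpr (Or.inl ⟨⟨i, rfl⟩, ⟨j, rfl⟩⟩))
    · ext x
      simp only [Finset.coe_union, Set.mem_union, Finset.mem_coe, Finset.mem_image,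
        mem_univ, true_and]
      constructor
      · intro hx
        obtain ⟨p, hp⟩ := hsurj x hx
        rcases p with i | j
        · exact Or.inl ⟨i, hp⟩
        · exact Or.inr ⟨j, hp⟩
      · rintro (⟨i, rfl⟩ | ⟨j, rfl⟩)
        · exact (φ (Sum.inl i)).2
        · exact (φ (Sum.inr j)).2
    · intro x y
      rw [hadj x y]
      simp only [Finset.mem_image, mem_univ, true_and]
  choose f hf hfv hfa using key
  have : Set.ncard {H' : G.Subgraph | Nonempty (K ≃g H'.coe)} ≤ Set.ncard (↑(pairFinset G a b) : Set (Finset β × Finset β)) := by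
    apply Set.ncard_le_ncard_of_injOn (fun H' => if h : H' ∈ {H' : G.Subgraph | Nonempty (K ≃g H'.coe)} then f H' h else (∅, ∅))
    · intro H' hH'; simp only [hH', dif_pos]; exact hf H' hH'
    · intro H1 h1 H2 h2 heq
      simp only [h1, h2, dif_pos] at heq
      apply SimpleGraph.Subgraph.ext
      · rw [hfv H1 h1, hfv H2 h2, heq]
      · ext x y
        rw [hfa H1 h1, hfa H2 h2, heq]
  rwa [Set.ncard_coe_finset] at this


def pairSubgraph (G : SimpleGraph β) (A B : Finset β) : G.Subgraph where
  verts := ↑(A ∪ B)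
  Adj x y := (((x ∈ A ∧ y ∈ B) ∨ (x ∈ B ∧ y ∈ A)) ∧ G.Adj x y)
  adj_sub h := h.2
  edge_vert := by rintro x y ⟨(⟨hx,_⟩|⟨hx,_⟩), _⟩ <;> simp [hx]
  symm := ⟨by rintro x y ⟨(⟨hx,hy⟩|⟨hx,hy⟩), hG⟩ <;> exact ⟨by tauto, hG.symm⟩⟩

lemma pairSubgraph_iso (G : SimpleGraph β) (A B : Finset β) (a b : ℕ)
    (hA : A.card = a) (hB : B.card = b) (hd : Disjoint A B)
    (h : ∀ x ∈ A, ∀ y ∈ B, G.Adj x y) :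
    Nonempty (completeBipartiteGraph (Fin a) (Fin b) ≃g (pairSubgraph G A B).coe) := by
  classical
  have hdS : Disjoint (↑A : Set β) (↑B : Set β) := by
    rw [Set.disjoint_left]
    intro x hx hx'
    exact (Finset.disjoint_left.mp hd) hx hx'
  let e : Fin a ⊕ Fin b ≃ ↥((pairSubgraph G A B).verts) :=
    ((A.equivFinOfCardEq hA).symm.sumCongr (B.equivFinOfCardEq hB).symm).trans
      (((Equiv.Set.union hdS).symm).trans (Equiv.setCongr (by rw [Finset.coe_union] : (↑A ∪ ↑B : Set β) = ↑(A ∪ B))))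
  have hl : ∀ i : Fin a, ((e (Sum.inl i)) : β) ∈ A := by
    intro i
    simp only [e, Equiv.trans_apply, Equiv.sumCongr_apply, Sum.map_inl,
      Equiv.Set.union_symm_apply_left, Equiv.setCongr_apply]
    exact ((A.equivFinOfCardEq hA).symm i).2
  have hr : ∀ j : Fin b, ((e (Sum.inr j)) : β) ∈ B := by
    intro j
    simp only [e, Equiv.trans_apply, Equiv.sumCongr_apply, Sum.map_inr,
      Equiv.Set.union_symm_apply_right, Equiv.setCongr_apply]
    exact ((B.equivFinOfCardEq hB).symm j).2
  refine ⟨⟨e, ?_⟩⟩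
  intro p q
  have hcoe : ∀ u v : ↥((pairSubgraph G A B).verts),
      (pairSubgraph G A B).coe.Adj u v ↔
        ((((u:β) ∈ A ∧ (v:β) ∈ B) ∨ ((u:β) ∈ B ∧ (v:β) ∈ A)) ∧ G.Adj u v) := fun u v => Iff.rfl
  rcases p with i | j <;> rcases q with i' | j' <;>
    simp only [hcoe, completeBipartiteGraph_adj] <;> simp only [Sum.isLeft_inl, Sum.isRight_inr,
      Sum.isLeft_inr, Sum.isRight_inl]
  · constructor
    · rintro ⟨(⟨h1, h2⟩ | ⟨h1, h2⟩), _⟩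
      · exact absurd h2 (Finset.disjoint_left.mp hd (hl i'))
      · exact absurd (hl i) (fun hh => Finset.disjoint_left.mp hd hh h1)
    · simp
  · constructor
    · intro _; simp
    · intro _
      refine ⟨Or.inl ⟨hl i, hr j'⟩, h _ (hl i) _ (hr j')⟩
  · constructor
    · intro _; simp
    · intro _
      refine ⟨Or.inr ⟨hr j, hl i'⟩, (h _ (hl i') _ (hr j)).symm⟩
  · constructor
    · rintro ⟨(⟨h1, h2⟩ | ⟨h1, h2⟩), _⟩
      · exact absurd h1 (Finset.disjoint_right.mp hd (hr j))
      · exact absurd h2 (Finset.disjoint_right.mp hd (hr j'))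
    · simp


lemma choose_mul_choose_le_copyCount (G : SimpleGraph β) (a b : ℕ) (L R : Finset β)
    (hd : Disjoint L R) (hadj : ∀ x ∈ L, ∀ y ∈ R, G.Adj x y) :
    (L.card.choose a) * (R.card.choose b) ≤
      _root_.copyCount (completeBipartiteGraph (Fin a) (Fin b)) G := by
  classical
  rw [_root_.copyCount]
  have hcard : ((L.powersetCard a ×ˢ R.powersetCard b)).card
      = L.card.choose a * R.card.choose b := by
    rw [Finset.card_product, Finset.card_powersetCard, Finset.card_powersetCard]
  rw [← hcard, ← Set.ncard_coe_finset]
  apply Set.ncard_le_ncard_of_injOn (fun p => pairSubgraph G p.1 p.2)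
  · rintro ⟨A, B⟩ hp
    simp only [Finset.coe_product, Set.mem_prod, Finset.mem_coe, Finset.mem_powersetCard] at hp
    obtain ⟨⟨hAL, hAa⟩, ⟨hBR, hBb⟩⟩ := hp
    exact pairSubgraph_iso G A B a b hAa hBb (hd.mono hAL hBR)
      (fun x hx y hy => hadj x (hAL hx) y (hBR hy))
  · rintro ⟨A, B⟩ hp ⟨A', B'⟩ hp' heq
    simp only [Finset.coe_product, Set.mem_prod, Finset.mem_coe, Finset.mem_powersetCard] at hp hp'
    have hverts : (↑(A ∪ B) : Set β) = ↑(A' ∪ B') := congrArg SimpleGraph.Subgraph.verts heq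
    have huv : A ∪ B = A' ∪ B' := Finset.coe_injective hverts
    have key : ∀ (X Y : Finset β), X ⊆ L → Y ⊆ R → X = (X ∪ Y) ∩ L ∧ Y = (X ∪ Y) ∩ R := by
      intro X Y hXL hYR
      constructor
      · ext x
        simp only [Finset.mem_inter, Finset.mem_union]
        constructor
        · intro hx; exact ⟨Or.inl hx, hXL hx⟩
        · rintro ⟨(hx | hx), hxL⟩
          · exact hx
          · exact absurd hxL (Finset.disjoint_right.mp hd (hYR hx))
      · ext x
        simp only [Finset.mem_inter, Finset.mem_union]
        constructor
        · intro hx; exact ⟨Or.inr hx, hYR hx⟩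
        · rintro ⟨(hx | hx), hxR⟩
          · exact absurd hxR (Finset.disjoint_left.mp hd (hXL hx))
          · exact hx
    obtain ⟨k1, k2⟩ := key A B hp.1.1 hp.2.1
    obtain ⟨k1', k2'⟩ := key A' B' hp'.1.1 hp'.2.1
    have e1 : A = A' := by rw [k1, k1', huv]
    have e2 : B = B' := by rw [k2, k2', huv]
    exact Prod.ext e1 e2


lemma pairFinset_card_le (G : SimpleGraph β) (a b s M : ℕ) (hs : 0 < s) (ha : a ≤ s)
    (hfree : ∀ S : Finset β, S.card = s → (cN G S).card < M) :
    (pairFinset G a b).card ≤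
      Nat.choose (s-1) a * Nat.choose (Fintype.card β) b
        + Nat.choose (Fintype.card β) s * (Nat.choose s a * Nat.choose M b) := by
  classical
  set P := pairFinset G a b
  set P1 := P.filter (fun p => (cN G p.2).card ≤ s - 1) with hP1
  set P2 := P.filter (fun p => ¬ (cN G p.2).card ≤ s - 1) with hP2
  have hsplit : P.card ≤ P1.card + P2.card := by
    refine le_trans (Finset.card_le_card ?_) (Finset.card_union_le _ _)
    intro p hp
    rw [Finset.mem_union, hP1, hP2, Finset.mem_filter, Finset.mem_filter]
    by_cases h : (cN G p.2).card ≤ s - 1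
    · exact Or.inl ⟨hp, h⟩
    · exact Or.inr ⟨hp, h⟩
  have hsub : ∀ p ∈ P, p.1 ⊆ cN G p.2 := by
    rintro ⟨A, B⟩ hp x hx
    rw [mem_cN]
    intro y hy
    exact ((mem_pairFinset.mp hp).2.2.2 x hx y hy).symm
  have h1 : P1.card ≤ Nat.choose (s-1) a * Nat.choose (Fintype.card β) b := by
    set T1 := ((univ : Finset β).powersetCard b).biUnion
      (fun B => if (cN G B).card ≤ s - 1
        then ((cN G B).powersetCard a).image (fun A => (A, B)) else ∅) with hT1
    have hsubset : P1 ⊆ T1 := by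
      rintro ⟨A, B⟩ hp
      rw [hP1, Finset.mem_filter] at hp
      obtain ⟨hpP, hcond⟩ := hp
      rw [hT1, Finset.mem_biUnion]
      refine ⟨B, ?_, ?_⟩
      · rw [Finset.mem_powersetCard]
        exact ⟨Finset.subset_univ _, (mem_pairFinset.mp hpP).2.1⟩
      · rw [if_pos hcond, Finset.mem_image]
        refine ⟨A, ?_, rfl⟩
        rw [Finset.mem_powersetCard]
        exact ⟨hsub _ hpP, (mem_pairFinset.mp hpP).1⟩
    calc P1.card ≤ T1.card := Finset.card_le_card hsubset
      _ ≤ ∑ B ∈ (univ : Finset β).powersetCard b,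
            (if (cN G B).card ≤ s - 1
              then ((cN G B).powersetCard a).image (fun A => (A, B)) else ∅).card :=
          Finset.card_biUnion_le
      _ ≤ ∑ _B ∈ (univ : Finset β).powersetCard b, Nat.choose (s-1) a := by
          apply Finset.sum_le_sum
          intro B _
          split
          · calc _ ≤ ((cN G B).powersetCard a).card := Finset.card_image_le
              _ = Nat.choose ((cN G B).card) a := Finset.card_powersetCard _ _
              _ ≤ Nat.choose (s-1) a := Nat.choose_le_choose _ (by assumption)
          · simp
      _ = Nat.choose (Fintype.card β) b * Nat.choose (s-1) a := by
          rw [Finset.sum_const, smul_eq_mul, Finset.card_powersetCard, Finset.card_univ]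
      _ = Nat.choose (s-1) a * Nat.choose (Fintype.card β) b := Nat.mul_comm _ _
  have h2 : P2.card ≤ Nat.choose (Fintype.card β) s * (Nat.choose s a * Nat.choose M b) := by
    set T2 := ((univ : Finset β).powersetCard s).biUnion
      (fun S => ((S.powersetCard a) ×ˢ ((cN G S).powersetCard b)).image
        (fun q => (S, q))) with hT2
    have hT2card : T2.card ≤ Nat.choose (Fintype.card β) s * (Nat.choose s a * Nat.choose M b) := by
      calc T2.card ≤ ∑ S ∈ (univ : Finset β).powersetCard s,
            (((S.powersetCard a) ×ˢ ((cN G S).powersetCard b)).image (fun q => (S, q))).card :=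
          Finset.card_biUnion_le
        _ ≤ ∑ S ∈ (univ : Finset β).powersetCard s, Nat.choose s a * Nat.choose M b := by
            apply Finset.sum_le_sum
            intro S hS
            rw [Finset.mem_powersetCard] at hS
            calc _ ≤ ((S.powersetCard a) ×ˢ ((cN G S).powersetCard b)).card :=
                Finset.card_image_le
              _ = Nat.choose S.card a * Nat.choose ((cN G S).card) b := by
                  rw [Finset.card_product, Finset.card_powersetCard, Finset.card_powersetCard]
              _ ≤ Nat.choose s a * Nat.choose M b := by
                  apply Nat.mul_le_mul
                  · rw [hS.2]
                  · exact Nat.choose_le_choose _ (le_of_lt (hfree S hS.2))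
        _ = Nat.choose (Fintype.card β) s * (Nat.choose s a * Nat.choose M b) := by
            rw [Finset.sum_const, smul_eq_mul, Finset.card_powersetCard, Finset.card_univ]
    have hinj : P2.card ≤ T2.card := by
      apply Finset.card_le_card_of_injOn
        (fun p => (if h : ∃ S', p.1 ⊆ S' ∧ S' ⊆ cN G p.2 ∧ S'.card = s then h.choose else ∅, p))
      · rintro ⟨A, B⟩ hp
        rw [hP2, Finset.mem_coe, Finset.mem_filter] at hp
        obtain ⟨hpP, hcond⟩ := hp
        have hcond' : ¬ (cN G B).card ≤ s - 1 := hcond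
        have hAB := mem_pairFinset.mp hpP
        have hcard : s ≤ (cN G B).card := by omega
        have hex : ∃ S', A ⊆ S' ∧ S' ⊆ cN G B ∧ S'.card = s :=
          Finset.exists_subsuperset_card_eq (hsub _ hpP) (by rw [hAB.1]; exact ha) hcard
        simp only [Finset.mem_coe]
        rw [dif_pos hex]
        obtain ⟨hS1, hS2, hS3⟩ := hex.choose_spec
        rw [hT2, Finset.mem_biUnion]
        refine ⟨hex.choose, ?_, ?_⟩
        · rw [Finset.mem_powersetCard]
          exact ⟨Finset.subset_univ _, hS3⟩
        · rw [Finset.mem_image]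
          refine ⟨(A, B), ?_, rfl⟩
          rw [Finset.mem_product, Finset.mem_powersetCard, Finset.mem_powersetCard]
          refine ⟨⟨hS1, hAB.1⟩, ?_, hAB.2.1⟩
          intro y hy
          rw [mem_cN]
          intro x hxS
          have := hS2 hxS
          rw [mem_cN] at this
          exact (this y hy).symm
      · rintro ⟨A, B⟩ _ ⟨A', B'⟩ _ heq
        exact congrArg Prod.snd heq
    exact hinj.trans hT2card
  omega


end AUXALL


section GreedyX
open Finset
variable {α β : Type} [DecidableEq α] [Fintype α] [Fintype β] [DecidableEq β]

lemma color_fiber_card_le (G : SimpleGraph β) (c : Sym2 β → ℕ) (hc : IsProperEdgeColoring G c)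
    (S R : Finset β) (hR : ∀ y ∈ R, ∀ x ∈ S, G.Adj x y) (γ : ℕ) :
    (R.filter (fun y => γ ∈ S.image (fun w => c s(w, y)))).card ≤ S.card := by
  classical
  apply Finset.card_le_card_of_injOn
    (fun y => if h : ∃ w ∈ S, c s(w, y) = γ then h.choose else y)
  · intro y hy
    rw [Finset.mem_coe, Finset.mem_filter, Finset.mem_image] at hy
    have hex : ∃ w ∈ S, c s(w, y) = γ := by
      obtain ⟨w, hw, hcw⟩ := hy.2
      exact ⟨w, hw, hcw⟩
    simp only [Finset.mem_coe]
    rw [dif_pos hex]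
    exact hex.choose_spec.1
  · intro y hy y' hy' heq
    simp only [Finset.coe_filter, Set.mem_setOf_eq] at hy hy'
    by_contra hne
    have hex : ∃ w ∈ S, c s(w, y) = γ := by
      obtain ⟨w, hw, hcw⟩ := Finset.mem_image.mp hy.2; exact ⟨w, hw, hcw⟩
    have hex' : ∃ w ∈ S, c s(w, y') = γ := by
      obtain ⟨w, hw, hcw⟩ := Finset.mem_image.mp hy'.2; exact ⟨w, hw, hcw⟩
    simp only [] at heq
    rw [dif_pos hex, dif_pos hex'] at heq
    have hwS : hex.choose ∈ S := hex.choose_spec.1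
    have hcw : c s(hex.choose, y) = γ := hex.choose_spec.2
    have hcw' : c s(hex.choose, y') = γ := by
      rw [heq]; exact hex'.choose_spec.2
    have he1 : s(hex.choose, y) ∈ G.edgeSet := by
      rw [SimpleGraph.mem_edgeSet]; exact hR y hy.1 _ hwS
    have he2 : s(hex.choose, y') ∈ G.edgeSet := by
      rw [SimpleGraph.mem_edgeSet]; exact hR y' hy'.1 _ hwS
    have hne2 : s(hex.choose, y) ≠ s(hex.choose, y') := by
      intro h
      rw [Sym2.mk_eq_mk_iff (p := (hex.choose, y)) (q := (hex.choose, y'))] at h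
      rcases h with h | h
      · exact hne (congrArg Prod.snd h)
      · have h1 : hex.choose = y' := congrArg Prod.fst h
        have h2 : y = hex.choose := congrArg Prod.snd h
        exact hne (h2.trans h1)
    exact hc _ he1 _ he2 hne2 ⟨hex.choose, by simp, by simp⟩ (hcw.trans hcw'.symm)

lemma greedy_exists (G : SimpleGraph β) (c : Sym2 β → ℕ) (hc : IsProperEdgeColoring G c)
    (S : Finset β) (s : ℕ) (hS : S.card = s)
    (R : Finset β) (hR : ∀ y ∈ R, ∀ x ∈ S, G.Adj x y)
    (hcard : s * s * Fintype.card α + Fintype.card α + 1 ≤ R.card) :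
    ∀ V : Finset α, ∃ g : α → β, Set.InjOn g ↑V ∧ (∀ u ∈ V, g u ∈ R) ∧
      ∀ u ∈ V, ∀ u' ∈ V, u ≠ u' →
        Disjoint (S.image (fun w => c s(w, g u))) (S.image (fun w => c s(w, g u'))) := by
  classical
  have hRne : R.Nonempty := Finset.card_pos.mp (by omega)
  intro V
  induction V using Finset.induction_on with
  | empty =>
    exact ⟨fun _ => hRne.choose, by simp, by simp, by simp⟩
  | @insert v V' hv IH =>
    obtain ⟨g, hginj, hgR, hgdisj⟩ := IH
    set Col : β → Finset ℕ := fun y => S.image (fun w => c s(w, y)) with hCol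
    set Bad : Finset β := (V'.image g) ∪
      (R.filter (fun y => ∃ u ∈ V', ¬ Disjoint (Col y) (Col (g u)))) with hBad
    have hColcard : ∀ y, (Col y).card ≤ s := fun y =>
      le_trans Finset.card_image_le (le_of_eq hS)
    have hfilter : ∀ u : α, (R.filter (fun y => ¬ Disjoint (Col y) (Col (g u)))).card ≤ s * s := by
      intro u
      have hsubset : R.filter (fun y => ¬ Disjoint (Col y) (Col (g u))) ⊆
          (Col (g u)).biUnion (fun γ => R.filter (fun y => γ ∈ Col y)) := by
        intro y hy
        rw [Finset.mem_filter] at hy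
        obtain ⟨γ, hγ1, hγ2⟩ := Finset.not_disjoint_iff.mp hy.2
        rw [Finset.mem_biUnion]
        exact ⟨γ, hγ2, Finset.mem_filter.mpr ⟨hy.1, hγ1⟩⟩
      calc _ ≤ _ := Finset.card_le_card hsubset
        _ ≤ ∑ γ ∈ Col (g u), (R.filter (fun y => γ ∈ Col y)).card := Finset.card_biUnion_le
        _ ≤ ∑ _γ ∈ Col (g u), s :=
            Finset.sum_le_sum (fun γ _ => hS ▸ color_fiber_card_le G c hc S R hR γ)
        _ ≤ s * s := by
            rw [Finset.sum_const, smul_eq_mul]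
            exact Nat.mul_le_mul_right _ (hColcard _)
    have hBadcard : Bad.card < R.card := by
      have h1 : (V'.image g).card ≤ Fintype.card α :=
        le_trans Finset.card_image_le (Finset.card_le_univ _)
      have h2 : (R.filter (fun y => ∃ u ∈ V', ¬ Disjoint (Col y) (Col (g u)))).card
          ≤ s * s * Fintype.card α := by
        have hsubset : R.filter (fun y => ∃ u ∈ V', ¬ Disjoint (Col y) (Col (g u))) ⊆
            V'.biUnion (fun u => R.filter (fun y => ¬ Disjoint (Col y) (Col (g u)))) := by
          intro y hy
          rw [Finset.mem_filter] at hy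
          obtain ⟨u, hu1, hu2⟩ := hy.2
          rw [Finset.mem_biUnion]
          exact ⟨u, hu1, Finset.mem_filter.mpr ⟨hy.1, hu2⟩⟩
        calc _ ≤ _ := Finset.card_le_card hsubset
          _ ≤ ∑ u ∈ V', (R.filter (fun y => ¬ Disjoint (Col y) (Col (g u)))).card :=
              Finset.card_biUnion_le
          _ ≤ ∑ _u ∈ V', s * s := Finset.sum_le_sum (fun u _ => hfilter u)
          _ = V'.card * (s * s) := by rw [Finset.sum_const, smul_eq_mul]
          _ ≤ Fintype.card α * (s * s) :=
              Nat.mul_le_mul_right _ (Finset.card_le_univ _)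
          _ = s * s * Fintype.card α := Nat.mul_comm _ _
      have hun := Finset.card_union_le (V'.image g)
        (R.filter (fun y => ∃ u ∈ V', ¬ Disjoint (Col y) (Col (g u))))
      rw [← hBad] at hun
      omega
    have hex : (R \ Bad).Nonempty := by
      rw [← Finset.card_pos]
      have := Finset.le_card_sdiff Bad R
      omega
    obtain ⟨y, hy⟩ := hex
    rw [Finset.mem_sdiff] at hy
    obtain ⟨hyR, hyBad⟩ := hy
    have hyIm : y ∉ V'.image g := fun h => hyBad (Finset.mem_union_left _ h)
    have hyDisj : ∀ u ∈ V', Disjoint (Col y) (Col (g u)) := by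
      intro u hu
      by_contra hcon
      exact hyBad (Finset.mem_union_right _
        (Finset.mem_filter.mpr ⟨hyR, ⟨u, hu, hcon⟩⟩))
    have key : ∀ w, Function.update g v y w = if w = v then y else g w := by
      intro w; by_cases h : w = v
      · rw [h, Function.update_self, if_pos rfl]
      · rw [Function.update_of_ne h, if_neg h]
    refine ⟨Function.update g v y, ?_, ?_, ?_⟩
    · intro u hu u' hu' heq
      simp only [Finset.coe_insert, Set.mem_insert_iff, Finset.mem_coe] at hu hu'
      rw [key u, key u'] at heq
      rcases hu with h | huV <;> rcases hu' with h' | huV'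
      · exact h.trans h'.symm
      · rw [if_pos h, if_neg (ne_of_mem_of_not_mem huV' hv)] at heq
        exfalso; apply hyIm; rw [heq]; exact Finset.mem_image_of_mem g huV'
      · rw [if_neg (ne_of_mem_of_not_mem huV hv), if_pos h'] at heq
        exfalso; apply hyIm; rw [← heq]; exact Finset.mem_image_of_mem g huV
      · rw [if_neg (ne_of_mem_of_not_mem huV hv), if_neg (ne_of_mem_of_not_mem huV' hv)] at heq
        exact hginj huV huV' heq
    · intro u hu
      rw [key u]
      rcases Finset.mem_insert.mp hu with h | huV
      · rw [if_pos h]; exact hyR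
      · rw [if_neg (ne_of_mem_of_not_mem huV hv)]; exact hgR u huV
    · intro u hu u' hu' hne
      rw [key u, key u']
      rcases Finset.mem_insert.mp hu with h | huV <;> rcases Finset.mem_insert.mp hu' with h' | huV'
      · exact absurd (h.trans h'.symm) hne
      · rw [if_pos h, if_neg (ne_of_mem_of_not_mem huV' hv)]
        exact hyDisj u' huV'
      · rw [if_neg (ne_of_mem_of_not_mem huV hv), if_pos h']
        exact (hyDisj u huV).symm
      · rw [if_neg (ne_of_mem_of_not_mem huV hv), if_neg (ne_of_mem_of_not_mem huV' hv)]
        exact hgdisj u huV u' huV' hne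

end GreedyX


open Finset in
lemma no_big_common {α β : Type} [Fintype α] [Fintype β] [DecidableEq β]
    (F : SimpleGraph α) (G : SimpleGraph β) (c : Sym2 β → ℕ)
    (hc : IsProperEdgeColoring G c) (hnr : ¬ HasRainbowCopy F G c)
    {s : ℕ} (hsmem : s ∈ smallerClassSizes F)
    (S : Finset β) (hS : S.card = s) :
    (cN G S).card < s * s * Fintype.card α + Fintype.card α + 1 := by
  classical
  by_contra hcon
  push_neg at hcon
  obtain ⟨χ, hχ, hmin⟩ := hsmem
  set χ' : α → Bool :=
    if (univ.filter fun x => χ x = true).card ≤ (univ.filter fun x => χ x = false).card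
    then χ else (fun x => !(χ x)) with hχ'
  have hχ'prop : ∀ u v, F.Adj u v → χ' u ≠ χ' v := by
    intro u v huv
    rw [hχ']
    split
    · exact hχ u v huv
    · intro h
      exact hχ u v huv (by
        have := congrArg Bool.not h
        simpa using this)
  set T : Finset α := univ.filter (fun x => χ' x = true) with hTdef
  have hT : T.card = s := by
    rw [hTdef, hχ']
    split
    · rename_i h
      rw [hmin]
      exact (min_eq_left h).symm
    · rename_i h
      have : (univ.filter fun x => (!(χ x)) = true) = (univ.filter fun x => χ x = false) := by
        apply Finset.filter_congr
        intro x _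
        simp
      rw [this, hmin]
      exact (min_eq_right (le_of_not_ge h)).symm
  set R : Finset β := cN G S with hRdef
  have hR : ∀ y ∈ R, ∀ x ∈ S, G.Adj x y := by
    intro y hy x hx
    rw [hRdef, mem_cN] at hy
    exact hy x hx
  have hSR : ∀ y ∈ R, y ∉ S := by
    intro y hy hyS
    exact G.irrefl (hR y hy y hyS)
  obtain ⟨g, hginj, hgR, hgdisj⟩ := greedy_exists (α := α) (β := β) G c hc S s hS R hR hcon univ
  set eT : {x // x ∈ T} ≃ {y // y ∈ S} := Finset.equivOfCardEq (hT.trans hS.symm) with heT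
  set f : α → β := fun x => if h : x ∈ T then (eT ⟨x, h⟩ : β) else g x with hf
  have hfT : ∀ x (h : x ∈ T), f x ∈ S := by
    intro x h
    rw [hf]; simp only [dif_pos h]
    exact (eT ⟨x, h⟩).2
  have hfU : ∀ x, x ∉ T → f x ∈ R := by
    intro x h
    rw [hf]; simp only [dif_neg h]
    exact hgR x (mem_univ x)
  have hmemT : ∀ x, x ∈ T ↔ χ' x = true := by
    intro x; rw [hTdef]; simp
  have hTside : ∀ x y, F.Adj x y → x ∈ T → y ∉ T := by
    intro x y h hx hy
    exact hχ'prop x y h (((hmemT x).mp hx).trans ((hmemT y).mp hy).symm)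
  have hTside' : ∀ x y, F.Adj x y → x ∉ T → y ∈ T := by
    intro x y h hx
    rw [hmemT] at hx
    rw [Bool.not_eq_true] at hx
    have hne := hχ'prop x y h
    rw [hx] at hne
    rw [hmemT]
    cases h' : χ' y with
    | false => exact absurd h'.symm hne
    | true => rfl
  have hom : ∀ x y, F.Adj x y → G.Adj (f x) (f y) := by
    intro x y h
    by_cases hx : x ∈ T
    · exact hR (f y) (hfU y (hTside x y h hx)) (f x) (hfT x hx)
    · exact (hR (f x) (hfU x hx) (f y) (hfT y (hTside' x y h hx))).symm
  have hinj : Function.Injective f := by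
    intro x y heq
    by_cases hx : x ∈ T <;> by_cases hy : y ∈ T
    · have : eT ⟨x, hx⟩ = eT ⟨y, hy⟩ := by
        apply Subtype.ext
        rw [hf] at heq
        simpa only [dif_pos hx, dif_pos hy] using heq
      have := eT.injective this
      exact congrArg Subtype.val this
    · exfalso
      apply hSR (f y) (hfU y hy)
      rw [← heq]; exact hfT x hx
    · exfalso
      apply hSR (f x) (hfU x hx)
      rw [heq]; exact hfT y hy
    · rw [hf] at heq
      simp only [dif_neg hx, dif_neg hy] at heq
      exact hginj (by simp) (by simp) heq
  have aux : ∀ x₁ y₁ x₂ y₂, F.Adj x₁ y₁ → F.Adj x₂ y₂ → x₁ ∈ T → y₁ ∉ T → x₂ ∈ T → y₂ ∉ T →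
      c s(f x₁, f y₁) = c s(f x₂, f y₂) → x₁ = x₂ ∧ y₁ = y₂ := by
    intro x₁ y₁ x₂ y₂ h₁ h₂ hx₁ hy₁ hx₂ hy₂ hcc
    have hgy : ∀ y, y ∉ T → f y = g y := by
      intro y hy; rw [hf]; simp only [dif_neg hy]
    have hy12 : y₁ = y₂ := by
      by_contra hne
      have hd := hgdisj y₁ (mem_univ _) y₂ (mem_univ _) hne
      apply Finset.disjoint_left.mp hd
        (Finset.mem_image.mpr ⟨f x₁, hfT x₁ hx₁, by rw [← hgy y₁ hy₁]⟩)
      exact Finset.mem_image.mpr ⟨f x₂, hfT x₂ hx₂, by rw [← hgy y₂ hy₂, ← hcc]⟩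
    subst hy12
    refine ⟨?_, rfl⟩
    by_contra hne
    have hfx : f x₁ ≠ f x₂ := fun h => hne (hinj h)
    have he1 : s(f x₁, f y₁) ∈ G.edgeSet := (G.mem_edgeSet).mpr (hom _ _ h₁)
    have he2 : s(f x₂, f y₁) ∈ G.edgeSet := (G.mem_edgeSet).mpr (hom _ _ h₂)
    have hneedge : s(f x₁, f y₁) ≠ s(f x₂, f y₁) := by
      intro h
      rw [Sym2.mk_eq_mk_iff (p := (f x₁, f y₁)) (q := (f x₂, f y₁))] at h
      rcases h with h | h
      · exact hfx (congrArg Prod.fst h)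
      · have h1 : f x₁ = f y₁ := congrArg Prod.fst h
        exact hy₁ ((hinj h1) ▸ hx₁)
    exact hc _ he1 _ he2 hneedge ⟨f y₁, by simp, by simp⟩ hcc
  have norm : ∀ x y, F.Adj x y → ∃ x' y', x' ∈ T ∧ y' ∉ T ∧ F.Adj x' y' ∧ s(x, y) = s(x', y') := by
    intro x y h
    by_cases hx : x ∈ T
    · exact ⟨x, y, hx, hTside x y h hx, h, rfl⟩
    · exact ⟨y, x, hTside' x y h hx, hx, h.symm, Sym2.eq_swap⟩
  apply hnr
  refine ⟨⟨f, @fun u v h => hom u v h⟩, hinj, ?_⟩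
  intro e₁ he₁ e₂ he₂ hcc
  induction e₁ using Sym2.ind with
  | _ x₁ y₁ =>
  induction e₂ using Sym2.ind with
  | _ x₂ y₂ =>
  rw [SimpleGraph.mem_edgeSet] at he₁ he₂
  obtain ⟨x₁', y₁', hx₁, hy₁, h₁, heq₁⟩ := norm x₁ y₁ he₁
  obtain ⟨x₂', y₂', hx₂, hy₂, h₂, heq₂⟩ := norm x₂ y₂ he₂
  rw [heq₁, heq₂] at hcc ⊢
  rw [Sym2.map_pair_eq, Sym2.map_pair_eq] at hcc
  obtain ⟨hxx, hyy⟩ := aux x₁' y₁' x₂' y₂' h₁ h₂ hx₁ hy₁ hx₂ hy₂ hcc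
  rw [hxx, hyy]


section T6
open Finset

-- card of Fin-prefix filter
lemma card_filter_fin_lt {n k : ℕ} (h : k ≤ n) :
    ((univ : Finset (Fin n)).filter (fun x : Fin n => (x : ℕ) < k)).card = k := by
  classical
  have : (univ : Finset (Fin n)).filter (fun x : Fin n => (x : ℕ) < k)
      = (univ : Finset (Fin k)).map (Fin.castLEEmb h) := by
    ext x
    simp only [Finset.mem_filter, Finset.mem_univ, true_and, Finset.mem_map]
    constructor
    · intro hx
      refine ⟨⟨(x : ℕ), hx⟩, ?_⟩
      first
      | (ext; simp [Fin.castLEEmb])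
      | (refine ⟨Finset.mem_univ _, ?_⟩; ext; simp [Fin.castLEEmb])
    · intro hx
      obtain ⟨i, hi⟩ : ∃ i : Fin k, Fin.castLE h i = x := by
        first
        | exact hx
        | exact ⟨hx.choose, hx.choose_spec.2⟩
        | (obtain ⟨i, -, hi⟩ := hx; exact ⟨i, hi⟩)
        | (obtain ⟨i, hi⟩ := hx; exact ⟨i, hi⟩)
      rw [← hi]
      simpa using i.2
  rw [this, Finset.card_map, Finset.card_univ, Fintype.card_fin]

-- the extremal graph on Fin n
def sideGraph (n k : ℕ) : SimpleGraph (Fin n) where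
  Adj x y := ((x : ℕ) < k) ≠ ((y : ℕ) < k)
  symm := ⟨by intro x y h; exact h.symm⟩
  loopless := ⟨by intro x h; exact h rfl⟩

lemma sideGraph_no_copy {α : Type} [Fintype α] (F : SimpleGraph α) (s : ℕ)
    (hs : IsLeast {t | ∃ χ : α → Bool, (∀ u v, F.Adj u v → χ u ≠ χ v) ∧
      t = min (Finset.univ.filter fun x => χ x = true).card
              (Finset.univ.filter fun x => χ x = false).card} s)
    (hs1 : 1 ≤ s) (n : ℕ) (hn : s - 1 ≤ n)
    (f : F →g (sideGraph n (s-1))) (hf : Function.Injective f) : False := by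
  classical
  set χ : α → Bool := fun x => decide ((f x : ℕ) < s - 1) with hχ
  have hproper : ∀ u v, F.Adj u v → χ u ≠ χ v := by
    intro u v huv h
    have hadj : ((f u : ℕ) < s-1) ≠ ((f v : ℕ) < s-1) := f.map_adj huv
    rw [hχ] at h
    simp only [decide_eq_decide] at h
    exact hadj (by rw [h])
  have hmem := hs.2 ⟨χ, hproper, rfl⟩
  have hcard : (Finset.univ.filter fun x => χ x = true).card ≤ s - 1 := by
    have hinj : ∀ x ∈ Finset.univ.filter (fun x => χ x = true),
        f x ∈ (univ : Finset (Fin n)).filter (fun y : Fin n => (y : ℕ) < s - 1) := by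
      intro x hx
      rw [Finset.mem_filter] at hx ⊢
      refine ⟨Finset.mem_univ _, ?_⟩
      have := hx.2
      rw [hχ] at this
      simpa using this
    calc (Finset.univ.filter fun x => χ x = true).card
        ≤ ((univ : Finset (Fin n)).filter (fun y : Fin n => (y : ℕ) < s - 1)).card :=
          Finset.card_le_card_of_injOn f hinj (fun x _ y _ h => hf h)
      _ = s - 1 := card_filter_fin_lt hn
  have : s ≤ s - 1 := le_trans hmem (le_trans (min_le_left _ _) hcard)
  omega

lemma exists_injective_coloring (n : ℕ) (G : SimpleGraph (Fin n)) :
    ∃ c : Sym2 (Fin n) → ℕ, IsProperEdgeColoring G c := by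
  classical
  refine ⟨fun e => ((Fintype.equivFin (Sym2 (Fin n))) e : ℕ), ?_⟩
  intro e₁ _ e₂ _ hne _ hcc
  exact hne ((Fintype.equivFin (Sym2 (Fin n))).injective (Fin.val_injective hcc))

lemma cbp_common_small (p m s : ℕ) (hp : p + 1 ≤ s)
    (S : Finset (Fin p ⊕ Fin m)) (hS : S.card = s) :
    (cN (completeBipartiteGraph (Fin p) (Fin m)) S).card ≤ p := by
  classical
  have hex : ∃ j : Fin m, Sum.inr j ∈ S := by
    by_contra hcon
    push_neg at hcon
    have hsub : S ⊆ (univ : Finset (Fin p)).image Sum.inl := by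
      intro y hy
      rcases y with i | j
      · exact Finset.mem_image_of_mem _ (Finset.mem_univ i)
      · exact absurd hy (hcon j)
    have := Finset.card_le_card hsub
    rw [hS] at this
    have him : ((univ : Finset (Fin p)).image (Sum.inl : Fin p → Fin p ⊕ Fin m)).card ≤ p := by
      calc _ ≤ (univ : Finset (Fin p)).card := Finset.card_image_le
        _ = p := by simp
    omega
  obtain ⟨j, hj⟩ := hex
  have hsub : cN (completeBipartiteGraph (Fin p) (Fin m)) S ⊆
      (univ : Finset (Fin p)).image Sum.inl := by
    intro v hv
    simp only [cN, Finset.mem_filter] at hv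
    have hadj := hv.2 (Sum.inr j) hj
    rcases v with i | j'
    · exact Finset.mem_image_of_mem _ (Finset.mem_univ i)
    · simp at hadj
  calc _ ≤ _ := Finset.card_le_card hsub
    _ ≤ (univ : Finset (Fin p)).card := Finset.card_image_le
    _ = p := by simp

lemma choose_descend (m k b' : ℕ) :
    m.choose (b'+1) ≤ (m - k).choose (b'+1) + k * m.choose b' := by
  induction k with
  | zero => simp
  | succ k ih =>
    have h1 : (m - k).choose (b'+1) ≤ (m - (k+1)).choose (b'+1) + m.choose b' := by
      rcases Nat.eq_zero_or_pos (m - k) with h | h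
      · have h' : m - (k+1) = 0 := by omega
        rw [h, h']
        exact Nat.le_add_right _ _
      · have h' : m - k = (m - (k+1)) + 1 := by omega
        rw [h', Nat.choose_succ_succ']
        have := Nat.choose_le_choose b' (show m - (k+1) ≤ m by omega)
        omega
    have hsm : (k+1) * m.choose b' = k * m.choose b' + m.choose b' := by ring
    omega

lemma choose_lower (m b : ℕ) : (m + 1 - b)^b ≤ b.factorial * m.choose b := by
  rw [← Nat.descFactorial_eq_factorial_mul_choose]
  exact Nat.pow_sub_le_descFactorial m b



end T6

/-- If `F` is bipartite with at least one edge, `p(F) = s` and `a < s < b`, then the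
maximum number of copies of `K_{a,b}` in an `n`-vertex graph admitting a proper edge
coloring with no rainbow copy of `F` equals `(1+o(1))·N(K_{a,b}, K_{s-1,n-s+1})`. -/
theorem stmt11 {α : Type} [Fintype α] (F : SimpleGraph α)
    (hedge : F.edgeSet.Nonempty) (s : ℕ)
    (hs : IsLeast (smallerClassSizes F) s) (a b : ℕ) (has : a < s) (hsb : s < b) :
    (fun n : ℕ =>
      ((sSup {N : ℕ | ∃ G : SimpleGraph (Fin n),
          (∃ c : Sym2 (Fin n) → ℕ, IsProperEdgeColoring G c ∧ ¬ HasRainbowCopy F G c) ∧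
          _root_.copyCount (completeBipartiteGraph (Fin a) (Fin b)) G = N} : ℕ) : ℝ) -
        ((_root_.copyCount (completeBipartiteGraph (Fin a) (Fin b))
          (completeBipartiteGraph (Fin (s - 1)) (Fin (n - s + 1))) : ℕ) : ℝ))
      =o[atTop] (fun n : ℕ =>
        ((_root_.copyCount (completeBipartiteGraph (Fin a) (Fin b))
          (completeBipartiteGraph (Fin (s - 1)) (Fin (n - s + 1))) : ℕ) : ℝ)) := by
  classical
  have hs1 : 1 ≤ s := by omega
  obtain ⟨χ₀, hχ₀, hmin₀⟩ := hs.1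
  have hsA : s ≤ Fintype.card α := by
    calc s ≤ (Finset.univ.filter fun x => χ₀ x = true).card := by
          rw [hmin₀]; exact min_le_left _ _
      _ ≤ Fintype.card α := by
          rw [← Finset.card_univ]
          exact Finset.card_le_card (Finset.filter_subset _ _)
  set M : ℕ := s * s * Fintype.card α + Fintype.card α + 1 with hM
  have hsM : s ≤ M := by omega
  set Kab := completeBipartiteGraph (Fin a) (Fin b) with hKab
  set SET : ℕ → Set ℕ := fun n => {N : ℕ | ∃ G : SimpleGraph (Fin n),
      (∃ c : Sym2 (Fin n) → ℕ, IsProperEdgeColoring G c ∧ ¬ HasRainbowCopy F G c) ∧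
      _root_.copyCount Kab G = N} with hSET
  set NF : ℕ → ℕ := fun n =>
    _root_.copyCount Kab (completeBipartiteGraph (Fin (s - 1)) (Fin (n - s + 1))) with hNF
  set C1 : ℕ := Nat.choose (s-1) a with hC1def
  have hC1 : 1 ≤ C1 := Nat.choose_pos (by omega)
  set C2 : ℕ := Nat.choose s a * Nat.choose M b with hC2def
  set UB : ℕ → ℕ := fun n => C1 * Nat.choose n b + Nat.choose n s * C2 with hUB
  set LOW : ℕ → ℕ := fun n => C1 * Nat.choose (n-s+1) b with hLOW
  set K₁ : ℕ := C1 * (s-1) + C2 with hK₁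
  -- per-graph upper bound
  have hub : ∀ n : ℕ, ∀ G : SimpleGraph (Fin n),
      (∃ c : Sym2 (Fin n) → ℕ, IsProperEdgeColoring G c ∧ ¬ HasRainbowCopy F G c) →
      _root_.copyCount Kab G ≤ UB n := by
    rintro n G ⟨c, hc, hnr⟩
    have hfree : ∀ S : Finset (Fin n), S.card = s → (cN G S).card < M :=
      fun S hS => no_big_common F G c hc hnr ⟨χ₀, hχ₀, hmin₀⟩ S hS
    have h2 := pairFinset_card_le G a b s M hs1 (by omega) hfree
    rw [Fintype.card_fin] at h2
    exact le_trans (copyCount_le_pairs G a b) h2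
  have hBdd : ∀ n, BddAbove (SET n) := by
    intro n
    refine ⟨UB n, ?_⟩
    rintro N ⟨G, hG, rfl⟩
    exact hub n G hG
  have hSne : ∀ n, (SET n).Nonempty := by
    intro n
    refine ⟨_root_.copyCount Kab ⊥, ⊥, ?_, rfl⟩
    obtain ⟨c, hc⟩ := exists_injective_coloring n ⊥
    refine ⟨c, hc, ?_⟩
    rintro ⟨f, -, -⟩
    obtain ⟨e, he⟩ := hedge
    induction e using Sym2.ind with
    | _ x y =>
      rw [SimpleGraph.mem_edgeSet] at he
      exact f.map_adj he
  have hsup_le : ∀ n, sSup (SET n) ≤ UB n := by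
    intro n
    apply csSup_le (hSne n)
    rintro N ⟨G, hG, rfl⟩
    exact hub n G hG
  have hsup_ge : ∀ n, s ≤ n → LOW n ≤ sSup (SET n) := by
    intro n hn
    have hcopy : LOW n ≤ _root_.copyCount Kab (sideGraph n (s-1)) := by
      set L := Finset.univ.filter (fun x : Fin n => (x : ℕ) < s-1) with hL
      set R := Finset.univ.filter (fun x : Fin n => ¬ ((x : ℕ) < s-1)) with hR
      have hLcard : L.card = s - 1 := card_filter_fin_lt (by omega)
      have hsum : L.card + R.card = n := by
        rw [hL, hR]
        rw [Finset.card_filter_add_card_filter_not]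
        simp
      have hRcard : R.card = n - s + 1 := by omega
      have hd : Disjoint L R := by
        rw [hL, hR]
        exact Finset.disjoint_filter_filter_not _ _ _
      have hadj : ∀ x ∈ L, ∀ y ∈ R, (sideGraph n (s-1)).Adj x y := by
        intro x hx y hy
        rw [hL, Finset.mem_filter] at hx
        rw [hR, Finset.mem_filter] at hy
        intro heq
        exact hy.2 (heq ▸ hx.2)
      have := choose_mul_choose_le_copyCount (sideGraph n (s-1)) a b L R hd hadj
      rw [hLcard, hRcard] at this
      exact this
    refine le_trans hcopy (le_csSup (hBdd n) ?_)
    refine ⟨sideGraph n (s-1), ?_, rfl⟩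
    obtain ⟨c, hc⟩ := exists_injective_coloring n (sideGraph n (s-1))
    refine ⟨c, hc, ?_⟩
    rintro ⟨f, hfinj, -⟩
    exact sideGraph_no_copy F s hs hs1 n (by omega) f hfinj
  have hNF_ge : ∀ n, LOW n ≤ NF n := by
    intro n
    set L := (Finset.univ : Finset (Fin (s-1))).image
      (Sum.inl : Fin (s-1) → Fin (s-1) ⊕ Fin (n-s+1)) with hL
    set R := (Finset.univ : Finset (Fin (n-s+1))).image
      (Sum.inr : Fin (n-s+1) → Fin (s-1) ⊕ Fin (n-s+1)) with hR
    have hLcard : L.card = s - 1 := by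
      rw [hL, Finset.card_image_of_injective _ Sum.inl_injective]
      simp
    have hRcard : R.card = n - s + 1 := by
      rw [hR, Finset.card_image_of_injective _ Sum.inr_injective]
      simp
    have hd : Disjoint L R := by
      rw [Finset.disjoint_left]
      rintro x hx hx'
      rw [hL, Finset.mem_image] at hx
      rw [hR, Finset.mem_image] at hx'
      obtain ⟨i, -, rfl⟩ := hx
      obtain ⟨j, -, hj⟩ := hx'
      exact Sum.inl_ne_inr hj.symm
    have hadj : ∀ x ∈ L, ∀ y ∈ R,
        (completeBipartiteGraph (Fin (s-1)) (Fin (n-s+1))).Adj x y := by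
      intro x hx y hy
      rw [hL, Finset.mem_image] at hx
      rw [hR, Finset.mem_image] at hy
      obtain ⟨i, -, rfl⟩ := hx
      obtain ⟨j, -, rfl⟩ := hy
      simp
    have := choose_mul_choose_le_copyCount
      (completeBipartiteGraph (Fin (s-1)) (Fin (n-s+1))) a b L R hd hadj
    rw [hLcard, hRcard] at this
    exact this
  have hNF_le : ∀ n, s ≤ n → NF n ≤ UB n := by
    intro n hn
    have hfree : ∀ S : Finset (Fin (s-1) ⊕ Fin (n-s+1)), S.card = s →
        (cN (completeBipartiteGraph (Fin (s-1)) (Fin (n-s+1))) S).card < M := by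
      intro S hS
      exact lt_of_le_of_lt (cbp_common_small (s-1) (n-s+1) s (by omega) S hS) (by omega)
    have h2 := pairFinset_card_le
      (completeBipartiteGraph (Fin (s-1)) (Fin (n-s+1))) a b s M hs1 (by omega) hfree
    have hcard : Fintype.card (Fin (s-1) ⊕ Fin (n-s+1)) = n := by
      rw [Fintype.card_sum, Fintype.card_fin, Fintype.card_fin]
      omega
    rw [hcard] at h2
    exact le_trans (copyCount_le_pairs _ a b) h2
  -- numeric bounds
  have hUBLOW : ∀ n, s ≤ n → UB n ≤ LOW n + K₁ * n ^ (b-1) := by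
    intro n hn
    have hb1 : b - 1 + 1 = b := by omega
    have key := choose_descend n (s-1) (b-1)
    rw [hb1] at key
    have hsub : n - (s-1) = n - s + 1 := by omega
    rw [hsub] at key
    have hcb : Nat.choose n (b-1) ≤ n ^ (b-1) := Nat.choose_le_pow n (b-1)
    have hcs : Nat.choose n s ≤ n ^ (b-1) := by
      rcases Nat.eq_zero_or_pos n with rfl | hn1
      · rw [Nat.choose_eq_zero_of_lt (by omega)]
        exact Nat.zero_le _
      · calc Nat.choose n s ≤ n ^ s := Nat.choose_le_pow n s
          _ ≤ n ^ (b-1) := Nat.pow_le_pow_right hn1 (by omega)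
    calc UB n = C1 * Nat.choose n b + Nat.choose n s * C2 := rfl
      _ ≤ C1 * (Nat.choose (n-s+1) b + (s-1) * Nat.choose n (b-1))
            + Nat.choose n s * C2 := by
          exact Nat.add_le_add_right (Nat.mul_le_mul_left _ key) _
      _ = LOW n + (C1 * (s-1) * Nat.choose n (b-1) + Nat.choose n s * C2) := by
          rw [hLOW]; ring
      _ ≤ LOW n + (C1 * (s-1) * n ^ (b-1) + n ^ (b-1) * C2) := by
          apply Nat.add_le_add_left
          apply Nat.add_le_add
          · exact Nat.mul_le_mul_left _ hcb
          · exact Nat.mul_le_mul_right _ hcs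
      _ = LOW n + K₁ * n ^ (b-1) := by rw [hK₁]; ring
  set n₀ : ℕ := 2*s + 2*b + M + 4 with hn₀
  have key1 : ∀ n, n₀ ≤ n → sSup (SET n) ≤ NF n + K₁ * n ^ (b-1) := by
    intro n hn
    calc sSup (SET n) ≤ UB n := hsup_le n
      _ ≤ LOW n + K₁ * n ^ (b-1) := hUBLOW n (by omega)
      _ ≤ NF n + K₁ * n ^ (b-1) := Nat.add_le_add_right (hNF_ge n) _
  have key2 : ∀ n, n₀ ≤ n → NF n ≤ sSup (SET n) + K₁ * n ^ (b-1) := by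
    intro n hn
    calc NF n ≤ UB n := hNF_le n (by omega)
      _ ≤ LOW n + K₁ * n ^ (b-1) := hUBLOW n (by omega)
      _ ≤ sSup (SET n) + K₁ * n ^ (b-1) :=
          Nat.add_le_add_right (hsup_ge n (by omega)) _
  have key3 : ∀ n, n₀ ≤ n → n ^ b ≤ 2 ^ b * Nat.factorial b * NF n := by
    intro n hn
    have hlow := choose_lower (n-s+1) b
    have hnn : n ≤ 2 * (n - s + 1 + 1 - b) := by omega
    have hNF1 : Nat.choose (n-s+1) b ≤ NF n := by
      refine le_trans ?_ (hNF_ge n)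
      rw [hLOW]
      exact Nat.le_mul_of_pos_left _ (by omega)
    calc n ^ b ≤ (2 * (n - s + 1 + 1 - b)) ^ b := Nat.pow_le_pow_left hnn b
      _ = 2 ^ b * (n - s + 1 + 1 - b) ^ b := by rw [Nat.mul_pow]
      _ ≤ 2 ^ b * (Nat.factorial b * Nat.choose (n-s+1) b) :=
          Nat.mul_le_mul_left _ hlow
      _ ≤ 2 ^ b * (Nat.factorial b * NF n) :=
          Nat.mul_le_mul_left _ (Nat.mul_le_mul_left _ hNF1)
      _ = 2 ^ b * Nat.factorial b * NF n := by ring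
  -- real asymptotics
  have H1 : (fun n : ℕ => ((sSup (SET n) : ℕ) : ℝ) - ((NF n : ℕ) : ℝ))
      =O[atTop] (fun n : ℕ => ((n : ℝ)) ^ (b-1)) := by
    rw [Asymptotics.isBigO_iff]
    refine ⟨(K₁ : ℝ), ?_⟩
    filter_upwards [Filter.eventually_ge_atTop n₀] with n hn
    have e1 := key1 n hn
    have e2 := key2 n hn
    have c1 : ((sSup (SET n) : ℕ) : ℝ) ≤ ((NF n : ℕ) : ℝ) + (K₁ : ℝ) * ((n:ℝ)) ^ (b-1) := by
      have := (Nat.cast_le (α := ℝ)).mpr e1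
      push_cast at this
      linarith
    have c2 : ((NF n : ℕ) : ℝ) ≤ ((sSup (SET n) : ℕ) : ℝ) + (K₁ : ℝ) * ((n:ℝ)) ^ (b-1) := by
      have := (Nat.cast_le (α := ℝ)).mpr e2
      push_cast at this
      linarith
    rw [Real.norm_eq_abs, Real.norm_eq_abs, abs_of_nonneg (by positivity : (0:ℝ) ≤ ((n:ℝ))^(b-1)),
      abs_sub_le_iff]
    constructor <;> linarith
  have H2 : (fun n : ℕ => ((n : ℝ)) ^ (b-1)) =o[atTop] (fun n : ℕ => ((n : ℝ)) ^ b) :=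
    (Asymptotics.isLittleO_pow_pow_atTop_of_lt (by omega)).comp_tendsto
      tendsto_natCast_atTop_atTop
  have H3 : (fun n : ℕ => ((n : ℝ)) ^ b) =O[atTop] (fun n : ℕ => ((NF n : ℕ) : ℝ)) := by
    rw [Asymptotics.isBigO_iff]
    refine ⟨((2 ^ b * Nat.factorial b : ℕ) : ℝ), ?_⟩
    filter_upwards [Filter.eventually_ge_atTop n₀] with n hn
    have e3 := key3 n hn
    rw [Real.norm_eq_abs, Real.norm_eq_abs,
      abs_of_nonneg (by positivity : (0:ℝ) ≤ ((n:ℝ))^b),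
      abs_of_nonneg (by positivity : (0:ℝ) ≤ ((NF n : ℕ):ℝ))]
    have := (Nat.cast_le (α := ℝ)).mpr e3
    push_cast at this ⊢
    linarith
  exact (H1.trans_isLittleO H2).trans_isBigO H3
end
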